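/- Let B be a right intensity matrix over Z, J ⊂ Z a recurrence class (i.e., B_J is irreducible and b_{ij} = 0 for i ∈ J, j ∉ J), and P := lim_{t→∞} exp(t·B). Then the submatrix P_J equals lim_{t→∞} exp(t·B_J), all rows of P_J coincide and have strictly positive entries, P_{J, Z\J} = 0, and each row of P restricted to indices in J is the unique probability row vector p with p·B_J = 0. -/

import Mathlib

open Matrix Filter

/-- A square matrix is reducible if some nonempty proper subset `I` of the index set
satisfies `A i j = 0` for all `i ∈ I`, `j ∉ I`. -/
def Matrix.IsReducible {Z : Type*} (A : Matrix Z Z ℝ) : Prop :=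
  ∃ I : Set Z, I.Nonempty ∧ I ≠ Set.univ ∧ ∀ i ∈ I, ∀ j ∉ I, A i j = 0

namespace Stmt17

open NormedSpace

variable {n : Type*} [Fintype n] [DecidableEq n]

/-- Entry evaluation as a continuous linear map. -/
def entryCLM (i j : n) : Matrix n n ℝ →L[ℝ] ℝ :=
  ⟨⟨⟨fun M => M i j, fun _ _ => rfl⟩, fun _ _ => rfl⟩, continuous_id.matrix_elem i j⟩

lemma hasSum_exp_entry (x : Matrix n n ℝ) (i j : n) :
    HasSum (fun m : ℕ => ((m.factorial : ℝ))⁻¹ * (x ^ m) i j) (exp x i j) := by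
  letI : SeminormedRing (Matrix n n ℝ) := Matrix.linftyOpSemiNormedRing
  letI : NormedRing (Matrix n n ℝ) := Matrix.linftyOpNormedRing
  letI : NormedAlgebra ℝ (Matrix n n ℝ) := Matrix.linftyOpNormedAlgebra
  have h := exp_series_hasSum_exp' (𝕂 := ℝ) x
  have h2 := h.mapL (entryCLM i j)
  exact h2

lemma pow_entry_nonneg {M : Matrix n n ℝ} (hM : ∀ i j, 0 ≤ M i j) (m : ℕ) (i j : n) :
    0 ≤ (M ^ m) i j := by
  induction m generalizing i j with
  | zero =>
    rw [pow_zero]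
    by_cases h : i = j <;> simp [Matrix.one_apply, h]
  | succ m ih =>
    rw [pow_succ, Matrix.mul_apply]
    exact Finset.sum_nonneg fun k _ => mul_nonneg (ih _ _) (hM _ _)

lemma row_sum_pow {A : Matrix n n ℝ} (h : ∀ i, ∑ j, A i j = 0) (m : ℕ) (i : n) :
    ∑ j, (A ^ (m + 1)) i j = 0 := by
  rw [pow_succ]
  simp only [Matrix.mul_apply]
  rw [Finset.sum_comm]
  simp [← Finset.mul_sum, h]

lemma exp_row_sum {A : Matrix n n ℝ} (h : ∀ i, ∑ j, A i j = 0) (i : n) :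
    ∑ j, exp A i j = 1 := by
  have hs : HasSum (fun m : ℕ => ∑ j, ((m.factorial : ℝ))⁻¹ * (A ^ m) i j)
      (∑ j, exp A i j) := hasSum_sum fun j _ => hasSum_exp_entry A i j
  have he : (fun m : ℕ => ∑ j, ((m.factorial : ℝ))⁻¹ * (A ^ m) i j)
      = fun m => if m = 0 then (1 : ℝ) else 0 := by
    funext m
    cases m with
    | zero => simp [Matrix.one_apply]
    | succ m => simp [← Finset.mul_sum, row_sum_pow h m i]
  rw [he] at hs
  exact hs.unique (hasSum_ite_eq 0 (1 : ℝ))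

lemma reach {A M : Matrix n n ℝ} (hirr : ¬ A.IsReducible)
    (hM : ∀ i j, 0 ≤ M i j) (hMA : ∀ i j, i ≠ j → M i j = A i j)
    (i j : n) : ∃ m, 0 < (M ^ m) i j := by
  by_contra hcon
  push_neg at hcon
  set S : Set n := {k | ∀ m, (M ^ m) k j = 0} with hS
  have hiS : i ∈ S := fun m => le_antisymm (hcon m) (pow_entry_nonneg hM m i j)
  have hjS : j ∉ S := by
    intro h
    simpa using h 0
  apply hirr
  refine ⟨S, ⟨i, hiS⟩, fun h => hjS (h.symm ▸ Set.mem_univ j), ?_⟩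
  intro a ha b hb
  have hab : a ≠ b := fun h => hb (h ▸ ha)
  rw [← hMA a b hab]
  by_contra hMab
  have hMab' : 0 < M a b := lt_of_le_of_ne (hM a b) (Ne.symm hMab)
  have hb' : ∃ m, 0 < (M ^ m) b j := by
    by_contra hc
    push_neg at hc
    exact hb fun m => le_antisymm (hc m) (pow_entry_nonneg hM m b j)
  obtain ⟨m, hm⟩ := hb'
  have hpos : 0 < (M ^ (m + 1)) a j := by
    rw [pow_succ', Matrix.mul_apply]
    refine Finset.sum_pos' (fun k _ => mul_nonneg (hM _ _) (pow_entry_nonneg hM m _ _)) ?_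
    exact ⟨b, Finset.mem_univ b, mul_pos hMab' hm⟩
  exact absurd (ha (m + 1)) (ne_of_gt hpos)

lemma exp_smul_one (r : ℝ) :
    exp (r • (1 : Matrix n n ℝ)) = Real.exp r • (1 : Matrix n n ℝ) := by
  rw [Matrix.smul_one_eq_diagonal, Matrix.exp_diagonal]
  have : exp (fun _ : n => r) = fun _ : n => Real.exp r := by
    funext k
    rw [Real.exp_eq_exp_ℝ]
    exact Pi.coe_exp (fun _ : n => r) k
  rw [this, ← Matrix.smul_one_eq_diagonal]

lemma exp_pos_entry {A : Matrix n n ℝ} (hoffA : ∀ i j, i ≠ j → 0 ≤ A i j)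
    (hirr : ¬ A.IsReducible) {t : ℝ} (ht : 0 < t) (i j : n) :
    0 < exp (t • A) i j := by
  set c : ℝ := ∑ k, |A k k| with hc
  set M : Matrix n n ℝ := A + c • 1 with hMdef
  have hck : ∀ k, |A k k| ≤ c :=
    fun k => Finset.single_le_sum (f := fun k => |A k k|) (fun _ _ => abs_nonneg _)
      (Finset.mem_univ k)
  have hMnn : ∀ a b, 0 ≤ M a b := by
    intro a b
    by_cases hab : a = b
    · subst hab
      have : M a a = A a a + c := by simp [hMdef, Matrix.one_apply]
      rw [this]
      have := neg_abs_le (A a a)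
      linarith [hck a]
    · have : M a b = A a b := by simp [hMdef, Matrix.one_apply_ne hab]
      rw [this]; exact hoffA a b hab
  have hMA : ∀ a b, a ≠ b → M a b = A a b := by
    intro a b hab; simp [hMdef, Matrix.one_apply_ne hab]
  obtain ⟨m, hm⟩ := reach hirr hMnn hMA i j
  have hsplit : t • A = t • M + (-(t * c)) • (1 : Matrix n n ℝ) := by
    rw [hMdef, smul_add, smul_smul, add_assoc, ← add_smul]
    simp
  have hcomm : Commute (t • M) ((-(t * c)) • (1 : Matrix n n ℝ)) :=
    ((Commute.one_right M).smul_right (-(t * c))).smul_left t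
  rw [hsplit, Matrix.exp_add_of_commute _ _ hcomm, exp_smul_one]
  have hmul : (exp (t • M) * (Real.exp (-(t * c)) • (1 : Matrix n n ℝ))) i j
      = Real.exp (-(t * c)) * exp (t • M) i j := by
    rw [mul_smul_comm, Matrix.mul_one, Matrix.smul_apply, smul_eq_mul]
  rw [hmul]
  have htM : ∀ a b, 0 ≤ (t • M) a b := fun a b => by
    rw [Matrix.smul_apply, smul_eq_mul]; exact mul_nonneg ht.le (hMnn a b)
  have hpow : 0 < ((t • M) ^ m) i j := by
    have : (t • M) ^ m = t ^ m • M ^ m := smul_pow t M m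
    rw [this, Matrix.smul_apply, smul_eq_mul]
    exact mul_pos (pow_pos ht m) hm
  have hsum : HasSum (fun k : ℕ => ((k.factorial : ℝ))⁻¹ * ((t • M) ^ k) i j)
      (exp (t • M) i j) := hasSum_exp_entry (t • M) i j
  have hle : ((m.factorial : ℝ))⁻¹ * ((t • M) ^ m) i j ≤ exp (t • M) i j :=
    le_hasSum hsum m fun k _ =>
      mul_nonneg (by positivity) (pow_entry_nonneg htM k i j)
  have : 0 < ((m.factorial : ℝ))⁻¹ * ((t • M) ^ m) i j := by positivity
  exact mul_pos (Real.exp_pos _) (lt_of_lt_of_le this hle)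

variable {Z : Type*} [Fintype Z] [DecidableEq Z]

lemma pow_block (B : Matrix Z Z ℝ) (J : Finset Z)
    (hclosed : ∀ i ∈ J, ∀ j, j ∉ J → B i j = 0) (m : ℕ) :
    (∀ i ∈ J, ∀ j, j ∉ J → (B ^ m) i j = 0) ∧
      (B ^ m).submatrix (Subtype.val : {x // x ∈ J} → Z) (Subtype.val : {x // x ∈ J} → Z)
        = (B.submatrix (Subtype.val : {x // x ∈ J} → Z)
            (Subtype.val : {x // x ∈ J} → Z)) ^ m := by
  induction m with
  | zero =>
    refine ⟨fun i hi j hj => ?_, ?_⟩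
    · rw [pow_zero]
      exact Matrix.one_apply_ne fun h => hj (h ▸ hi)
    · rw [pow_zero, pow_zero]
      exact Matrix.submatrix_one _ Subtype.val_injective
  | succ m ih =>
    refine ⟨fun i hi j hj => ?_, ?_⟩
    · rw [pow_succ, Matrix.mul_apply]
      refine Finset.sum_eq_zero fun k _ => ?_
      by_cases hk : k ∈ J
      · rw [hclosed k hk j hj, mul_zero]
      · rw [ih.1 i hi k hk, zero_mul]
    · ext i j
      rw [Matrix.submatrix_apply, pow_succ, pow_succ, Matrix.mul_apply, Matrix.mul_apply,
        ← ih.2]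
      have h1 : ∑ k : {x // x ∈ J}, ((B ^ m).submatrix (Subtype.val : {x // x ∈ J} → Z)
            (Subtype.val : {x // x ∈ J} → Z)) i k
              * (B.submatrix (Subtype.val : {x // x ∈ J} → Z)
                  (Subtype.val : {x // x ∈ J} → Z)) k j
          = ∑ k ∈ J, (B ^ m) i.1 k * B k j.1 := by
        rw [Finset.univ_eq_attach]
        exact Finset.sum_attach J fun k => (B ^ m) i.1 k * B k j.1
      rw [h1]
      exact (Finset.sum_subset (Finset.subset_univ J) fun k _ hk => by
        rw [ih.1 i.1 i.2 k hk, zero_mul]).symm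

lemma exp_block_zero (B : Matrix Z Z ℝ) (J : Finset Z)
    (hclosed : ∀ i ∈ J, ∀ j, j ∉ J → B i j = 0) {i j : Z} (hi : i ∈ J) (hj : j ∉ J) :
    exp B i j = 0 := by
  have h := hasSum_exp_entry B i j
  have h0 : (fun m : ℕ => ((m.factorial : ℝ))⁻¹ * (B ^ m) i j) = fun _ => (0 : ℝ) :=
    funext fun m => by rw [(pow_block B J hclosed m).1 i hi j hj, mul_zero]
  rw [h0] at h
  exact h.unique hasSum_zero

lemma exp_submatrix (B : Matrix Z Z ℝ) (J : Finset Z)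
    (hclosed : ∀ i ∈ J, ∀ j, j ∉ J → B i j = 0) :
    (exp B).submatrix (Subtype.val : {x // x ∈ J} → Z) (Subtype.val : {x // x ∈ J} → Z)
      = exp (B.submatrix (Subtype.val : {x // x ∈ J} → Z)
          (Subtype.val : {x // x ∈ J} → Z)) := by
  ext i j
  have h1 := hasSum_exp_entry B i.1 j.1
  have h2 := hasSum_exp_entry (B.submatrix (Subtype.val : {x // x ∈ J} → Z)
    (Subtype.val : {x // x ∈ J} → Z)) i j
  have he : (fun m : ℕ => ((m.factorial : ℝ))⁻¹ * (B ^ m) i.1 j.1)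
      = fun m : ℕ => ((m.factorial : ℝ))⁻¹
          * ((B.submatrix (Subtype.val : {x // x ∈ J} → Z)
              (Subtype.val : {x // x ∈ J} → Z)) ^ m) i j := by
    funext m
    rw [← (pow_block B J hclosed m).2]
    rfl
  rw [he] at h1
  exact h1.unique h2

lemma vecMul_pow_eq_zero {A : Matrix n n ℝ} {p : n → ℝ} (hp : p ᵥ* A = 0) (m : ℕ) :
    p ᵥ* (A ^ (m + 1)) = 0 := by
  induction m with
  | zero => simpa using hp
  | succ m ih => rw [pow_succ, ← Matrix.vecMul_vecMul, ih, Matrix.zero_vecMul]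

lemma vecMul_exp_of_stationary {A : Matrix n n ℝ} {p : n → ℝ} (hp : p ᵥ* A = 0) :
    p ᵥ* exp A = p := by
  funext j
  have hs : HasSum (fun m : ℕ => ∑ k, p k * (((m.factorial : ℝ))⁻¹ * (A ^ m) k j))
      (∑ k, p k * exp A k j) :=
    hasSum_sum fun k _ => (hasSum_exp_entry A k j).mul_left (p k)
  have he : (fun m : ℕ => ∑ k, p k * (((m.factorial : ℝ))⁻¹ * (A ^ m) k j))
      = fun m => if m = 0 then p j else 0 := by
    funext m
    cases m with
    | zero => simp [Matrix.one_apply]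
    | succ m =>
      have h0 : ∑ k, p k * (A ^ (m + 1)) k j = 0 := by
        have := congrFun (vecMul_pow_eq_zero hp m) j
        simpa [Matrix.vecMul, dotProduct] using this
      rw [if_neg (Nat.succ_ne_zero m)]
      calc ∑ k, p k * ((((m + 1).factorial : ℝ))⁻¹ * (A ^ (m + 1)) k j)
          = (((m + 1).factorial : ℝ))⁻¹ * ∑ k, p k * (A ^ (m + 1)) k j := by
            rw [Finset.mul_sum]
            exact Finset.sum_congr rfl fun k _ => by ring
        _ = 0 := by rw [h0, mul_zero]
  rw [he] at hs
  have := hs.unique (hasSum_ite_eq 0 (p j))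
  have hgoal : (p ᵥ* exp A) j = ∑ k, p k * exp A k j := by
    simp [Matrix.vecMul, dotProduct]
  rw [hgoal, this]

lemma stationary_unique {S : Matrix n n ℝ} (hpos : ∀ i j, 0 < S i j)
    (hrow : ∀ i, ∑ j, S i j = 1) {r : n → ℝ} (hr : r ᵥ* S = r)
    (hsum : ∑ j, r j = 0) : r = 0 := by
  have habs : ∀ j, |r j| ≤ ∑ i, |r i| * S i j := by
    intro j
    have h1 : r j = ∑ i, r i * S i j := by
      have := congrFun hr j
      simpa [Matrix.vecMul, dotProduct] using this.symm
    rw [h1]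
    refine (Finset.abs_sum_le_sum_abs _ _).trans ?_
    exact Finset.sum_le_sum fun i _ => by rw [abs_mul, abs_of_pos (hpos i j)]
  have hsumeq : ∑ j, ∑ i, |r i| * S i j = ∑ i, |r i| := by
    rw [Finset.sum_comm]
    refine Finset.sum_congr rfl fun i _ => ?_
    rw [← Finset.mul_sum, hrow i, mul_one]
  have heach : ∀ j, |r j| = ∑ i, |r i| * S i j := by
    have hle : ∑ j, |r j| ≤ ∑ j, ∑ i, |r i| * S i j := Finset.sum_le_sum fun j _ => habs j
    rw [hsumeq] at hle
    have : ∑ j, (∑ i, |r i| * S i j - |r j|) = 0 := by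
      rw [Finset.sum_sub_distrib, hsumeq]
      linarith [hle]
    have hz := (Finset.sum_eq_zero_iff_of_nonneg
      (fun j _ => by linarith [habs j])).mp this
    intro j
    have := hz j (Finset.mem_univ j)
    linarith
  by_contra hne
  have ⟨a, ha⟩ : ∃ a, r a ≠ 0 := by
    by_contra hc
    push_neg at hc
    exact hne (funext fun x => hc x)
  have hex : (∃ a, 0 < r a) ∧ (∃ b, r b < 0) := by
    constructor
    · by_contra hc
      push_neg at hc
      have : ∀ x ∈ Finset.univ, -r x ≥ 0 := fun x _ => by simpa using hc x
      have hz := (Finset.sum_eq_zero_iff_of_nonneg this).mp (by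
        rw [← neg_zero, ← hsum, ← Finset.sum_neg_distrib])
      exact ha (by simpa using hz a (Finset.mem_univ a))
    · by_contra hc
      push_neg at hc
      have hz := (Finset.sum_eq_zero_iff_of_nonneg (fun x _ => hc x)).mp hsum
      exact ha (hz a (Finset.mem_univ a))
  obtain ⟨⟨a, hapos⟩, ⟨b, hbneg⟩⟩ := hex
  set f : n → ℝ := fun i => r i * S i a with hf
  have hfa : 0 < f a := mul_pos hapos (hpos a a)
  have hfb : f b < 0 := mul_neg_of_neg_of_pos hbneg (hpos b a)
  have heq : |∑ i, f i| = ∑ i, |f i| := by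
    have h1 : r a = ∑ i, f i := by
      have := congrFun hr a
      simpa [Matrix.vecMul, dotProduct, hf] using this.symm
    have h2 : ∑ i, |f i| = ∑ i, |r i| * S i a :=
      Finset.sum_congr rfl fun i _ => by rw [hf, abs_mul, abs_of_pos (hpos i a)]
    rw [← h1, h2, ← heach a]
  rcases le_or_gt 0 (∑ i, f i) with hge | hlt
  · have : ∑ i, (|f i| - f i) = 0 := by
      rw [Finset.sum_sub_distrib, ← heq, abs_of_nonneg hge, sub_self]
    have hz := (Finset.sum_eq_zero_iff_of_nonneg
      (fun i _ => sub_nonneg.mpr (le_abs_self (f i)))).mp this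
    have := hz b (Finset.mem_univ b)
    have : |f b| = f b := by linarith
    linarith [abs_nonneg (f b)]
  · have : ∑ i, (|f i| + f i) = 0 := by
      rw [Finset.sum_add_distrib, ← heq, abs_of_neg hlt]
      ring
    have hz := (Finset.sum_eq_zero_iff_of_nonneg
      (fun i _ => by linarith [neg_abs_le (f i)])).mp this
    have := hz a (Finset.mem_univ a)
    have : |f a| = -f a := by linarith
    linarith [abs_nonneg (f a)]

end Stmt17

/-- Let `J` be a recurrence class of the right intensity matrix `B`
(`B_J` irreducible and rows of `J` vanishing outside `J`) and `P` the final limit of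
`exp (t • B)`. Then `P_J = lim exp (t • B_J)`, `P_{J, Z\J} = 0`, all rows of `P_J`
coincide and are strictly positive, and the common row of `P` on `J` is the unique
probability vector `p` with `p ᵥ* B_J = 0`. -/
theorem final_limit_on_recurrence_class {Z : Type*} [Fintype Z] [DecidableEq Z]
    (B : Matrix Z Z ℝ)
    (hoff : ∀ i j, i ≠ j → 0 ≤ B i j)
    (hrow : ∀ i, ∑ j, B i j = 0)
    (J : Finset Z) (hJne : J.Nonempty)
    (hclosed : ∀ i ∈ J, ∀ j, j ∉ J → B i j = 0)
    (hirr : ¬ (B.submatrix (Subtype.val : {x // x ∈ J} → Z)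
        (Subtype.val : {x // x ∈ J} → Z)).IsReducible)
    (P : Matrix Z Z ℝ)
    (hP : Tendsto (fun t : ℝ => NormedSpace.exp (t • B)) atTop (nhds P)) :
    Tendsto (fun t : ℝ =>
        NormedSpace.exp (t • B.submatrix (Subtype.val : {x // x ∈ J} → Z)
          (Subtype.val : {x // x ∈ J} → Z)))
      atTop
      (nhds (P.submatrix (Subtype.val : {x // x ∈ J} → Z)
        (Subtype.val : {x // x ∈ J} → Z))) ∧
    (∀ i ∈ J, ∀ j, j ∉ J → P i j = 0) ∧
    (∀ i ∈ J, ∀ i' ∈ J, ∀ j ∈ J, P i j = P i' j) ∧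
    (∀ i ∈ J, ∀ j ∈ J, 0 < P i j) ∧
    (∀ p : {x // x ∈ J} → ℝ,
      ((∀ j, 0 ≤ p j) ∧ (∑ j, p j = 1) ∧
        p ᵥ* B.submatrix (Subtype.val : {x // x ∈ J} → Z)
          (Subtype.val : {x // x ∈ J} → Z) = 0)
      ↔ (∀ i ∈ J, ∀ j : {x // x ∈ J}, P i j = p j)) := by
  classical
  set A := B.submatrix (Subtype.val : {x // x ∈ J} → Z)
    (Subtype.val : {x // x ∈ J} → Z) with hAdef
  set Q := P.submatrix (Subtype.val : {x // x ∈ J} → Z)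
    (Subtype.val : {x // x ∈ J} → Z) with hQdef
  haveI : Nonempty {x // x ∈ J} := ⟨⟨hJne.choose, hJne.choose_spec⟩⟩
  have hclosed' : ∀ t : ℝ, ∀ i ∈ J, ∀ j, j ∉ J → (t • B) i j = 0 := fun t i hi j hj => by
    rw [Matrix.smul_apply, hclosed i hi j hj, smul_zero]
  have hexp_sub : ∀ t : ℝ, (NormedSpace.exp (t • B)).submatrix
      (Subtype.val : {x // x ∈ J} → Z) (Subtype.val : {x // x ∈ J} → Z)
      = NormedSpace.exp (t • A) := fun t =>
    Stmt17.exp_submatrix (t • B) J (hclosed' t)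
  have hcont_sub : Continuous fun M : Matrix Z Z ℝ =>
      M.submatrix (Subtype.val : {x // x ∈ J} → Z) (Subtype.val : {x // x ∈ J} → Z) :=
    continuous_matrix fun i j => continuous_id.matrix_elem i.1 j.1
  have hQ : Tendsto (fun t : ℝ => NormedSpace.exp (t • A)) atTop (nhds Q) := by
    have h := (hcont_sub.tendsto P).comp hP
    have heq : ((fun M : Matrix Z Z ℝ =>
        M.submatrix (Subtype.val : {x // x ∈ J} → Z) (Subtype.val : {x // x ∈ J} → Z))
          ∘ fun t : ℝ => NormedSpace.exp (t • B))
        = fun t : ℝ => NormedSpace.exp (t • A) := funext fun t => hexp_sub t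
    rw [heq] at h
    exact h
  have hQe : ∀ i j, Tendsto (fun t : ℝ => NormedSpace.exp (t • A) i j) atTop
      (nhds (Q i j)) := fun i j => ((continuous_id.matrix_elem i j).tendsto Q).comp hQ
  have hAoff : ∀ i j : {x // x ∈ J}, i ≠ j → 0 ≤ A i j :=
    fun i j hij => hoff i.1 j.1 fun h => hij (Subtype.ext h)
  have hArow : ∀ i : {x // x ∈ J}, ∑ j, A i j = 0 := by
    intro i
    have h1 : ∑ j : {x // x ∈ J}, A i j = ∑ j ∈ J, B i.1 j := by
      rw [Finset.univ_eq_attach]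
      exact Finset.sum_attach J fun j => B i.1 j
    rw [h1, Finset.sum_subset (Finset.subset_univ J)
      (fun j _ hj => hclosed i.1 i.2 j hj)]
    exact hrow i.1
  have hrowtA : ∀ t : ℝ, ∀ i : {x // x ∈ J}, ∑ j, (t • A) i j = 0 := by
    intro t i
    simp only [Matrix.smul_apply, smul_eq_mul, ← Finset.mul_sum, hArow i, mul_zero]
  have hQrow : ∀ i, ∑ j, Q i j = 1 := by
    intro i
    have h1 : Tendsto (fun t : ℝ => ∑ j, NormedSpace.exp (t • A) i j) atTop
        (nhds (∑ j, Q i j)) := tendsto_finset_sum _ fun j _ => hQe i j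
    have h2 : (fun t : ℝ => ∑ j, NormedSpace.exp (t • A) i j) = fun _ => (1 : ℝ) :=
      funext fun t => Stmt17.exp_row_sum (hrowtA t) i
    rw [h2] at h1
    exact tendsto_nhds_unique h1 tendsto_const_nhds
  have hexp_pos : ∀ {t : ℝ}, 0 < t → ∀ i j, 0 < NormedSpace.exp (t • A) i j :=
    fun ht i j => Stmt17.exp_pos_entry hAoff hirr ht i j
  have hQnn : ∀ i j, 0 ≤ Q i j := by
    intro i j
    refine ge_of_tendsto (hQe i j) ?_
    filter_upwards [eventually_gt_atTop (0 : ℝ)] with t ht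
    exact (hexp_pos ht i j).le
  have hQS : ∀ s : ℝ, Q * NormedSpace.exp (s • A) = Q := by
    intro s
    have h1 : Tendsto (fun t : ℝ => NormedSpace.exp ((t + s) • A)) atTop (nhds Q) := by
      have := hQ.comp (tendsto_atTop_add_const_right atTop s tendsto_id)
      simpa [Function.comp_def] using this
    have h2 : (fun t : ℝ => NormedSpace.exp ((t + s) • A))
        = fun t : ℝ => NormedSpace.exp (t • A) * NormedSpace.exp (s • A) := by
      funext t
      rw [add_smul]
      exact Matrix.exp_add_of_commute _ _ (((Commute.refl A).smul_left t).smul_right s)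
    rw [h2] at h1
    have h3 : Tendsto (fun t : ℝ => NormedSpace.exp (t • A) * NormedSpace.exp (s • A))
        atTop (nhds (Q * NormedSpace.exp (s • A))) := hQ.mul tendsto_const_nhds
    exact tendsto_nhds_unique h3 h1
  have hQA : Q * A = 0 := by
    letI : SeminormedRing (Matrix {x // x ∈ J} {x // x ∈ J} ℝ) :=
      Matrix.linftyOpSemiNormedRing
    letI : NormedRing (Matrix {x // x ∈ J} {x // x ∈ J} ℝ) := Matrix.linftyOpNormedRing
    letI : NormedAlgebra ℝ (Matrix {x // x ∈ J} {x // x ∈ J} ℝ) :=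
      Matrix.linftyOpNormedAlgebra
    have hd := (hasDerivAt_exp_smul_const (𝕂 := ℝ) A (0 : ℝ)).const_mul Q
    have hconst : (fun s : ℝ => Q * NormedSpace.exp (s • A)) = fun _ => Q :=
      funext fun s => hQS s
    replace hd := hd.congr_of_eventuallyEq (f₁ := fun _ : ℝ => Q)
      (Filter.Eventually.of_forall fun s => (hQS s).symm)
    have h0 := hd.unique (hasDerivAt_const 0 Q)
    rw [zero_smul, NormedSpace.exp_zero, one_mul] at h0
    exact h0
  have hstat : ∀ i, (fun k => Q i k) ᵥ* A = 0 := by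
    intro i
    funext j
    have := congrFun (congrFun hQA i) j
    simpa [Matrix.mul_apply, Matrix.vecMul, dotProduct] using this
  have hSpos : ∀ i j, 0 < NormedSpace.exp ((1 : ℝ) • A) i j := hexp_pos one_pos
  have hSrow : ∀ i, ∑ j, NormedSpace.exp ((1 : ℝ) • A) i j = 1 :=
    fun i => Stmt17.exp_row_sum (hrowtA 1) i
  have hfix : ∀ a, (fun k => Q a k) ᵥ* NormedSpace.exp ((1 : ℝ) • A) = fun k => Q a k := by
    intro a
    funext b
    have := congrFun (congrFun (hQS 1) a) b
    simpa [Matrix.mul_apply, Matrix.vecMul, dotProduct] using this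
  have hrows : ∀ i i' j, Q i j = Q i' j := by
    intro i i' j
    have hdiff : ((fun k => Q i k) - fun k => Q i' k) ᵥ* NormedSpace.exp ((1 : ℝ) • A)
        = (fun k => Q i k) - fun k => Q i' k := by
      rw [Matrix.sub_vecMul, hfix i, hfix i']
    have hs0 : ∑ k, ((fun k => Q i k) - fun k => Q i' k) k = 0 := by
      simp only [Pi.sub_apply]
      rw [Finset.sum_sub_distrib, hQrow i, hQrow i', sub_self]
    have hzero := Stmt17.stationary_unique hSpos hSrow hdiff hs0
    have := congrFun hzero j
    simp only [Pi.sub_apply, Pi.zero_apply] at this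
    linarith
  have hQpos : ∀ i j, 0 < Q i j := by
    intro i j
    have h1 : Q i j = ∑ k, Q i k * NormedSpace.exp ((1 : ℝ) • A) k j := by
      have := congrFun (congrFun (hQS 1) i) j
      rw [Matrix.mul_apply] at this
      exact this.symm
    rw [h1]
    have hk : ∃ k, 0 < Q i k := by
      by_contra hc
      push_neg at hc
      have hle : ∑ k, Q i k ≤ 0 := Finset.sum_nonpos fun k _ => hc k
      rw [hQrow i] at hle
      linarith
    obtain ⟨k, hk⟩ := hk
    exact Finset.sum_pos' (fun l _ => mul_nonneg (hQnn i l) (hSpos l j).le)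
      ⟨k, Finset.mem_univ k, mul_pos hk (hSpos k j)⟩
  have hPQ : ∀ (i : Z) (hi : i ∈ J) (j : Z) (hj : j ∈ J), P i j = Q ⟨i, hi⟩ ⟨j, hj⟩ :=
    fun i hi j hj => by rw [hQdef]; rfl
  have hpQ : ∀ p : {x // x ∈ J} → ℝ, p ᵥ* A = 0 →
      ∀ j, ∑ k, p k * Q k j = p j := by
    intro p hp j
    have hfixp : ∀ t : ℝ, ∑ k, p k * NormedSpace.exp (t • A) k j = p j := by
      intro t
      have hptA : p ᵥ* (t • A) = 0 := by
        funext b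
        have h0 : ∑ k, p k * A k b = 0 := by
          have := congrFun hp b
          simpa [Matrix.vecMul, dotProduct] using this
        have h1 : (p ᵥ* (t • A)) b = t * ∑ k, p k * A k b := by
          simp only [Matrix.vecMul, dotProduct, Matrix.smul_apply, smul_eq_mul,
            Finset.mul_sum]
          exact Finset.sum_congr rfl fun k _ => by ring
        rw [Pi.zero_apply, h1, h0, mul_zero]
      have := congrFun (Stmt17.vecMul_exp_of_stationary hptA) j
      simpa [Matrix.vecMul, dotProduct] using this
    have h1 : Tendsto (fun t : ℝ => ∑ k, p k * NormedSpace.exp (t • A) k j) atTop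
        (nhds (∑ k, p k * Q k j)) :=
      tendsto_finset_sum _ fun k _ => (hQe k j).const_mul (p k)
    have h2 : (fun t : ℝ => ∑ k, p k * NormedSpace.exp (t • A) k j) = fun _ => p j :=
      funext fun t => hfixp t
    rw [h2] at h1
    exact tendsto_nhds_unique h1 tendsto_const_nhds
  refine ⟨hQ, ?_, ?_, ?_, ?_⟩
  · intro i hi j hj
    have h1 : Tendsto (fun t : ℝ => NormedSpace.exp (t • B) i j) atTop (nhds (P i j)) :=
      ((continuous_id.matrix_elem i j).tendsto P).comp hP
    have h2 : (fun t : ℝ => NormedSpace.exp (t • B) i j) = fun _ => (0 : ℝ) :=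
      funext fun t => Stmt17.exp_block_zero (t • B) J (hclosed' t) hi hj
    rw [h2] at h1
    exact tendsto_nhds_unique h1 tendsto_const_nhds
  · intro i hi i' hi' j hj
    rw [hPQ i hi j hj, hPQ i' hi' j hj]
    exact hrows _ _ _
  · intro i hi j hj
    rw [hPQ i hi j hj]
    exact hQpos _ _
  · intro p
    constructor
    · rintro ⟨hp0, hp1, hpA⟩
      intro i hi j
      have hj := hpQ p hpA j
      rw [hPQ i hi j.1 j.2]
      have h2 : ∑ k, p k * Q k j = Q ⟨i, hi⟩ j := by
        calc ∑ k, p k * Q k j = ∑ k, p k * Q ⟨i, hi⟩ j :=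
              Finset.sum_congr rfl fun k _ => by rw [hrows k ⟨i, hi⟩ j]
          _ = (∑ k, p k) * Q ⟨i, hi⟩ j := by rw [Finset.sum_mul]
          _ = Q ⟨i, hi⟩ j := by rw [hp1, one_mul]
      rw [← hj, h2]
    · intro h
      obtain ⟨i0, hi0⟩ := hJne
      have hrowp : ∀ j : {x // x ∈ J}, p j = Q ⟨i0, hi0⟩ j := fun j => by
        rw [← h i0 hi0 j, hPQ i0 hi0 j.1 j.2]
      refine ⟨fun j => ?_, ?_, ?_⟩
      · rw [hrowp j]
        exact hQnn _ _
      · calc ∑ j, p j = ∑ j, Q ⟨i0, hi0⟩ j := Finset.sum_congr rfl fun j _ => hrowp j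
          _ = 1 := hQrow _
      · have hpe : p = fun k => Q ⟨i0, hi0⟩ k := funext hrowp
        rw [hpe]
        exact hstat _
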